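/- arXiv:0908.2711 — 4 statements merged into one kernel-verified Lean document; each statement's English description precedes it below -/
import Mathlib

section
/- Let E be a linear subspace of ℝⁿ and p_E the orthogonal projection onto E. Let μ be a Borel probability measure on ℝⁿ and ν a Borel probability measure on ℝⁿ supported in E. Let ρ = (Id × p_E)_# μ, and let σ be an optimal transference plan (for the quadratic cost |x−y|²) between (p_E)_# μ and ν. Assume that Spt((p_E)_# μ) is compact. Then for every Borel probability measure Γ on ℝⁿ × ℝⁿ × ℝⁿ whose marginal on the first two factors is ρ and whose marginal on the last two factors is σ (a gluing of ρ and σ), the marginal π¹³_# Γ of Γ on the first and third factors is an optimal transference plan between μ and ν. -/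
open MeasureTheory
open scoped ENNReal

/-- A transference plan (coupling) between `μ` and `ν`. -/
def IsCoupling {X Y : Type*} [MeasurableSpace X] [MeasurableSpace Y]
    (ρ : Measure (X × Y)) (μ : Measure X) (ν : Measure Y) : Prop :=
  ρ.map Prod.fst = μ ∧ ρ.map Prod.snd = ν

/-- The quadratic cost of a transference plan. -/
noncomputable def quadCost {X : Type*} [PseudoMetricSpace X] [MeasurableSpace X]
    (ρ : Measure (X × X)) : ℝ≥0∞ :=
  ∫⁻ p, ENNReal.ofReal (dist p.1 p.2 ^ 2) ∂ρ

/-- An optimal transference plan for the quadratic cost. -/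
def IsOptimalCoupling {X : Type*} [PseudoMetricSpace X] [MeasurableSpace X]
    (ρ : Measure (X × X)) (μ ν : Measure X) : Prop :=
  IsCoupling ρ μ ν ∧ ∀ σ : Measure (X × X), IsCoupling σ μ ν → quadCost ρ ≤ quadCost σ

/-- The (closed) support of a measure. -/
def spt {X : Type*} [TopologicalSpace X] [MeasurableSpace X] (μ : Measure X) : Set X :=
  {x | ∀ U ∈ nhds x, μ U ≠ 0}

/-- The orthogonal projection onto a linear subspace `E ⊆ ℝⁿ`, as a map `ℝⁿ → ℝⁿ`. -/
noncomputable def projE {n : ℕ} (E : Submodule ℝ (EuclideanSpace ℝ (Fin n))) :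
    EuclideanSpace ℝ (Fin n) → EuclideanSpace ℝ (Fin n) :=
  fun x => (E.orthogonalProjection x : EuclideanSpace ℝ (Fin n))

section aux

variable {n : ℕ} (E : Submodule ℝ (EuclideanSpace ℝ (Fin n)))

lemma projE_continuous : Continuous (projE E) :=
  continuous_subtype_val.comp E.orthogonalProjection.continuous

lemma projE_measurable : Measurable (projE E) := (projE_continuous E).measurable

lemma projE_pythagoras (x y : EuclideanSpace ℝ (Fin n)) (hy : y ∈ E) :
    dist x y ^ 2 = dist x (projE E x) ^ 2 + dist (projE E x) y ^ 2 := by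
  have h1 : x - projE E x ∈ Eᗮ := E.sub_starProjection_mem_orthogonal x
  have h2 : projE E x - y ∈ E := E.sub_mem (E.orthogonalProjection x).2 hy
  have hinner : inner (𝕜 := ℝ) (x - projE E x) (projE E x - y) = (0:ℝ) :=
    Submodule.inner_left_of_mem_orthogonal h2 h1
  have := norm_add_sq_eq_norm_sq_add_norm_sq_real hinner
  simp only [dist_eq_norm]
  rw [show x - y = (x - projE E x) + (projE E x - y) by abel]
  simpa [pow_two] using this

end aux

/-- Gluing an optimal plan with a projection plan: if `ρ = (Id × p_E)_# μ` and `σ` is an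
optimal plan between `(p_E)_# μ` and a measure `ν` supported in `E`, with `Spt((p_E)_# μ)`
compact, then for any gluing `Γ` of `ρ` and `σ`, the marginal `π¹³_# Γ` is an optimal
transference plan between `μ` and `ν`. -/
theorem optimal_of_gluing_projection (n : ℕ) (E : Submodule ℝ (EuclideanSpace ℝ (Fin n)))
    (μ ν : Measure (EuclideanSpace ℝ (Fin n)))
    [IsProbabilityMeasure μ] [IsProbabilityMeasure ν]
    (hν : ν (↑E : Set (EuclideanSpace ℝ (Fin n)))ᶜ = 0)
    (σ : Measure (EuclideanSpace ℝ (Fin n) × EuclideanSpace ℝ (Fin n)))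
    (hσ : IsOptimalCoupling σ (μ.map (projE E)) ν)
    (hcpt : IsCompact (spt (μ.map (projE E))))
    (Γ : Measure (EuclideanSpace ℝ (Fin n) ×
      EuclideanSpace ℝ (Fin n) × EuclideanSpace ℝ (Fin n)))
    [IsProbabilityMeasure Γ]
    (hΓ12 : Γ.map (fun t => (t.1, t.2.1)) = μ.map (fun x => (x, projE E x)))
    (hΓ23 : Γ.map Prod.snd = σ) :
    IsOptimalCoupling (Γ.map (fun t => (t.1, t.2.2))) μ ν := by
  classical
  set V := EuclideanSpace ℝ (Fin n)
  set p := projE E with hp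
  have hpm : Measurable p := projE_measurable E
  have hpc : Continuous p := projE_continuous E
  have hEc : MeasurableSet (↑E : Set V) := E.closed_of_finiteDimensional.measurableSet
  -- measurability of various maps
  have hπ12 : Measurable (fun t : V × V × V => (t.1, t.2.1)) :=
    measurable_fst.prodMk (measurable_fst.comp measurable_snd)
  have hπ13 : Measurable (fun t : V × V × V => (t.1, t.2.2)) :=
    measurable_fst.prodMk (measurable_snd.comp measurable_snd)
  have hπ3 : Measurable (fun t : V × V × V => t.2.2) := measurable_snd.comp measurable_snd
  have hgr : Measurable (fun x : V => (x, p x)) := measurable_id.prodMk hpm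
  have hpq : Measurable (fun q : V × V => (p q.1, q.2)) :=
    (hpm.comp measurable_fst).prodMk measurable_snd
  have hfm : Measurable (fun x : V => ENNReal.ofReal (dist x (p x) ^ 2)) :=
    (measurable_id.dist hpm).pow_const 2 |>.ennreal_ofReal
  have hfm2 : Measurable (fun q : V × V => ENNReal.ofReal (dist q.1 (p q.1) ^ 2)) :=
    (measurable_fst.dist (hpm.comp measurable_fst)).pow_const 2 |>.ennreal_ofReal
  have hfm3 : Measurable (fun t : V × V × V => ENNReal.ofReal (dist t.1 (p t.1) ^ 2)) :=
    (measurable_fst.dist (hpm.comp measurable_fst)).pow_const 2 |>.ennreal_ofReal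
  have hcm : Measurable (fun q : V × V => ENNReal.ofReal (dist q.1 q.2 ^ 2)) :=
    (measurable_fst.dist measurable_snd).pow_const 2 |>.ennreal_ofReal
  set A : ℝ≥0∞ := ∫⁻ x, ENNReal.ofReal (dist x (p x) ^ 2) ∂μ with hA
  have cost_split : ∀ γ : Measure (V × V), IsCoupling γ μ ν →
      quadCost γ = A + quadCost (γ.map (fun q => (p q.1, q.2))) := by
    intro γ hγ
    have hγae : ∀ᵐ q ∂γ, q.2 ∈ (↑E : Set V) := by
      refine ae_iff.2 ?_
      have h := Measure.map_apply (μ := γ) measurable_snd hEc.compl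
      rw [hγ.2] at h
      calc γ {q : V × V | ¬ q.2 ∈ (↑E : Set V)} = γ (Prod.snd ⁻¹' (↑E : Set V)ᶜ) := rfl
        _ = ν (↑E : Set V)ᶜ := h.symm
        _ = 0 := hν
    have heq : ∀ᵐ q ∂γ, ENNReal.ofReal (dist q.1 q.2 ^ 2) =
        ENNReal.ofReal (dist q.1 (p q.1) ^ 2) + ENNReal.ofReal (dist (p q.1) q.2 ^ 2) := by
      filter_upwards [hγae] with q hq
      rw [projE_pythagoras E q.1 q.2 hq,
        ENNReal.ofReal_add (sq_nonneg _) (sq_nonneg _)]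
    have h1 : quadCost γ = ∫⁻ q, (ENNReal.ofReal (dist q.1 (p q.1) ^ 2)
        + ENNReal.ofReal (dist (p q.1) q.2 ^ 2)) ∂γ := lintegral_congr_ae heq
    rw [h1, lintegral_add_left hfm2]
    congr 1
    · rw [hA, ← hγ.1, lintegral_map hfm measurable_fst]
    · rw [quadCost, lintegral_map hcm hpq]
  -- marginals of Γ
  have hΓ1 : Γ.map (Prod.fst : V × V × V → V) = μ := by
    have h : Γ.map (Prod.fst : V × V × V → V)
        = (Γ.map (fun t : V × V × V => (t.1, t.2.1))).map Prod.fst := by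
      rw [Measure.map_map measurable_fst hπ12]; rfl
    rw [h, hΓ12, Measure.map_map measurable_fst hgr]
    exact Measure.map_id
  have hΓ3 : Γ.map (fun t : V × V × V => t.2.2) = ν := by
    have h : Γ.map (fun t : V × V × V => t.2.2)
        = (Γ.map (Prod.snd : V × V × V → V × V)).map Prod.snd := by
      rw [Measure.map_map measurable_snd measurable_snd]; rfl
    rw [h, hΓ23, hσ.1.2]
  -- a.e. facts for Γ
  have hΓae1 : ∀ᵐ t ∂Γ, t.2.1 = p t.1 := by
    have hS : MeasurableSet {q : V × V | q.2 = p q.1} :=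
      (isClosed_eq continuous_snd (hpc.comp continuous_fst)).measurableSet
    refine ae_iff.2 ?_
    have h0 : (Γ.map (fun t : V × V × V => (t.1, t.2.1))) {q : V × V | q.2 = p q.1}ᶜ = 0 := by
      rw [hΓ12, Measure.map_apply hgr hS.compl,
        show ((fun x : V => (x, p x)) ⁻¹' {q : V × V | q.2 = p q.1}ᶜ) = ∅ by ext x; simp; exact rfl]
      exact measure_empty
    rw [Measure.map_apply hπ12 hS.compl] at h0
    exact h0
  have hΓae2 : ∀ᵐ t ∂Γ, t.2.2 ∈ (↑E : Set V) := by
    refine ae_iff.2 ?_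
    have h := Measure.map_apply (μ := Γ) hπ3 hEc.compl
    rw [hΓ3] at h
    calc Γ {t : V × V × V | ¬ t.2.2 ∈ (↑E : Set V)}
        = Γ ((fun t : V × V × V => t.2.2) ⁻¹' (↑E : Set V)ᶜ) := rfl
      _ = ν (↑E : Set V)ᶜ := h.symm
      _ = 0 := hν
  -- cost of the candidate plan
  have hcost : quadCost (Γ.map (fun t : V × V × V => (t.1, t.2.2))) = A + quadCost σ := by
    rw [quadCost, lintegral_map hcm hπ13]
    have heq : ∀ᵐ t ∂Γ, ENNReal.ofReal (dist t.1 t.2.2 ^ 2) =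
        ENNReal.ofReal (dist t.1 (p t.1) ^ 2) + ENNReal.ofReal (dist t.2.1 t.2.2 ^ 2) := by
      filter_upwards [hΓae1, hΓae2] with t h1 h2
      rw [projE_pythagoras E t.1 t.2.2 h2, ENNReal.ofReal_add (sq_nonneg _) (sq_nonneg _), h1]
    rw [lintegral_congr_ae heq, lintegral_add_left hfm3]
    congr 1
    · rw [hA, ← hΓ1, lintegral_map hfm measurable_fst]
    · rw [quadCost, ← hΓ23, lintegral_map hcm measurable_snd]
  -- the candidate is a coupling
  have hcoup : IsCoupling (Γ.map (fun t : V × V × V => (t.1, t.2.2))) μ ν := by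
    constructor
    · rw [Measure.map_map measurable_fst hπ13]; exact hΓ1
    · rw [Measure.map_map measurable_snd hπ13]; exact hΓ3
  refine ⟨hcoup, fun γ hγ => ?_⟩
  rw [hcost, cost_split γ hγ]
  refine add_le_add (le_refl A) (hσ.2 _ ?_)
  constructor
  · rw [Measure.map_map measurable_fst hpq,
      show ((Prod.fst : V × V → V) ∘ fun q : V × V => (p q.1, q.2)) = p ∘ Prod.fst from rfl,
      ← Measure.map_map hpm measurable_fst, hγ.1]
  · rw [Measure.map_map measurable_snd hpq]
    exact hγ.2
end

section
/- Let X₁, X₂, X₃ be Polish spaces, μ₁ a Borel probability measure on X₁, and F¹ : X₁ → X₂, F² : X₂ → X₃ continuous maps. Set μ₂ = F¹_# μ₁, ρ₁₂ = (Id × F¹)_# μ₁ and ρ₂₃ = (Id × F²)_# μ₂. Then every Borel probability measure Γ on X₁ × X₂ × X₃ whose marginal on X₁ × X₂ is ρ₁₂ and whose marginal on X₂ × X₃ is ρ₂₃ satisfies Γ = (Id × F¹ × (F² ∘ F¹))_# μ₁, and consequently π¹³_# Γ = (Id × (F² ∘ F¹))_# μ₁, the transference plan associated to the composed map F² ∘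 F¹. -/
open MeasureTheory

/-- Gluing of transference plans induced by maps extends composition of maps: if
`ρ₁₂ = (Id × F¹)_# μ₁` and `ρ₂₃ = (Id × F²)_# μ₂` with `μ₂ = F¹_# μ₁`, then any gluing `Γ`
of `ρ₁₂` and `ρ₂₃` equals `(Id × F¹ × (F² ∘ F¹))_# μ₁`, and its marginal on the first and
third factors is the plan associated to the composed map `F² ∘ F¹`. -/
theorem gluing_of_maps_eq {X₁ X₂ X₃ : Type*}
    [TopologicalSpace X₁] [PolishSpace X₁] [MeasurableSpace X₁] [BorelSpace X₁]
    [TopologicalSpace X₂] [PolishSpace X₂] [MeasurableSpace X₂] [BorelSpace X₂]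
    [TopologicalSpace X₃] [PolishSpace X₃] [MeasurableSpace X₃] [BorelSpace X₃]
    (μ₁ : Measure X₁) [IsProbabilityMeasure μ₁]
    (F₁ : X₁ → X₂) (F₂ : X₂ → X₃) (hF₁ : Continuous F₁) (hF₂ : Continuous F₂)
    (Γ : Measure (X₁ × X₂ × X₃)) [IsProbabilityMeasure Γ]
    (hΓ12 : Γ.map (fun t => (t.1, t.2.1)) = μ₁.map (fun x => (x, F₁ x)))
    (hΓ23 : Γ.map Prod.snd = (μ₁.map F₁).map (fun y => (y, F₂ y))) :
    Γ = μ₁.map (fun x => (x, F₁ x, F₂ (F₁ x))) ∧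
    Γ.map (fun t => (t.1, t.2.2)) = μ₁.map (fun x => (x, F₂ (F₁ x))) := by
  have mF₁ : Measurable F₁ := hF₁.measurable
  have mF₂ : Measurable F₂ := hF₂.measurable
  have m12 : Measurable (fun t : X₁ × X₂ × X₃ => (t.1, t.2.1)) := by fun_prop
  have mG1 : Measurable (fun x : X₁ => (x, F₁ x)) := by fun_prop
  have mG2 : Measurable (fun y : X₂ => (y, F₂ y)) := by fun_prop
  have mG : Measurable (fun x : X₁ => (x, F₁ x, F₂ (F₁ x))) := by fun_prop
  have hS : MeasurableSet {p : X₁ × X₂ | p.2 = F₁ p.1} :=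
    (isClosed_eq continuous_snd (hF₁.comp continuous_fst)).measurableSet
  have hT : MeasurableSet {q : X₂ × X₃ | q.2 = F₂ q.1} :=
    (isClosed_eq continuous_snd (hF₂.comp continuous_fst)).measurableSet
  have h1 : ∀ᵐ t ∂Γ, t.2.1 = F₁ t.1 := by
    have key : Γ ((fun t : X₁ × X₂ × X₃ => (t.1, t.2.1)) ⁻¹'
        {p : X₁ × X₂ | p.2 = F₁ p.1}ᶜ) = 0 := by
      rw [← Measure.map_apply m12 hS.compl, hΓ12, Measure.map_apply mG1 hS.compl]
      have : (fun x : X₁ => (x, F₁ x)) ⁻¹' {p : X₁ × X₂ | p.2 = F₁ p.1}ᶜ = ∅ := by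
        ext x; simp
      rw [this, measure_empty]
    exact ae_iff.2 key
  have h2 : ∀ᵐ t ∂Γ, t.2.2 = F₂ t.2.1 := by
    have key : Γ (Prod.snd ⁻¹' {q : X₂ × X₃ | q.2 = F₂ q.1}ᶜ) = 0 := by
      rw [← Measure.map_apply measurable_snd hT.compl, hΓ23,
        Measure.map_apply mG2 hT.compl]
      have : (fun y : X₂ => (y, F₂ y)) ⁻¹' {q : X₂ × X₃ | q.2 = F₂ q.1}ᶜ = ∅ := by
        ext y; simp
      rw [this, measure_empty]
    exact ae_iff.2 key
  have hae : (fun t : X₁ × X₂ × X₃ => (t.1, F₁ t.1, F₂ (F₁ t.1))) =ᵐ[Γ] id := by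
    filter_upwards [h1, h2] with t ht1 ht2
    simp only [id]
    rw [← ht1, ← ht2]
  have hfst : Γ.map (fun t : X₁ × X₂ × X₃ => t.1) = μ₁ := by
    have e1 : Γ.map (fun t : X₁ × X₂ × X₃ => t.1)
        = (Γ.map (fun t : X₁ × X₂ × X₃ => (t.1, t.2.1))).map Prod.fst := by
      rw [Measure.map_map measurable_fst m12]; rfl
    have e2 : (μ₁.map (fun x => (x, F₁ x))).map Prod.fst = μ₁.map (fun x => x) := by
      rw [Measure.map_map measurable_fst mG1]; rfl
    rw [e1, hΓ12, e2]
    exact Measure.map_id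
  have hmain : Γ = μ₁.map (fun x => (x, F₁ x, F₂ (F₁ x))) := by
    have e3 : Γ.map (fun t : X₁ × X₂ × X₃ => (t.1, F₁ t.1, F₂ (F₁ t.1))) = Γ := by
      rw [Measure.map_congr hae, Measure.map_id]
    have e4 : (Γ.map (fun t : X₁ × X₂ × X₃ => t.1)).map (fun x => (x, F₁ x, F₂ (F₁ x)))
        = Γ.map (fun t : X₁ × X₂ × X₃ => (t.1, F₁ t.1, F₂ (F₁ t.1))) := by
      rw [Measure.map_map mG measurable_fst]; rfl
    rw [← e3, ← e4, hfst]
  refine ⟨hmain, ?_⟩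
  rw [hmain, Measure.map_map (by fun_prop : Measurable
    (fun t : X₁ × X₂ × X₃ => (t.1, t.2.2))) mG]
  rfl
end

section
/- Let U ⊆ ℝⁿ be open, φ : U → ℝ^{n+k} a C¹ immersion, E ⊆ ℝ^{n+k} a linear subspace with dim E = m ≤ n, and P : ℝ^{n+k} → E the orthogonal projection. Let f : U → [0,∞) be a Borel measurable function, locally integrable with respect to the Riemannian volume measure dv_M = √(det(Dφ(x)ᵀ Dφ(x))) dx, which vanishes at every point x ∈ U where the linear map P ∘ Dφ(x) : ℝⁿ → E is not surjective. Then the pushforward measure (P ∘ φ)_# (f · dv_M) is absolutely continuous with respect to the Lebesgue measure of E. -/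
open MeasureTheory Matrix
open scoped ENNReal

/-- The matrix of the differential `Dφ(x)` in the canonical bases. -/
noncomputable def Dmat {n m : ℕ} (φ : EuclideanSpace ℝ (Fin n) → EuclideanSpace ℝ (Fin m))
    (x : EuclideanSpace ℝ (Fin n)) : Matrix (Fin m) (Fin n) ℝ :=
  Matrix.of fun i j => fderiv ℝ φ x (EuclideanSpace.single j 1) i

/-- The induced Riemannian metric `g(x) = Dφ(x)ᵀ Dφ(x)`. -/
noncomputable def gMat {n m : ℕ} (φ : EuclideanSpace ℝ (Fin n) → EuclideanSpace ℝ (Fin m))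
    (x : EuclideanSpace ℝ (Fin n)) : Matrix (Fin n) (Fin n) ℝ :=
  (Dmat φ x)ᵀ * Dmat φ x

/-- The Riemannian volume measure `dv_M = √(det g(x)) dx` on `U`. -/
noncomputable def volM {n m : ℕ} (φ : EuclideanSpace ℝ (Fin n) → EuclideanSpace ℝ (Fin m))
    (U : Set (EuclideanSpace ℝ (Fin n))) : Measure (EuclideanSpace ℝ (Fin n)) :=
  (volume.restrict U).withDensity fun x => ENNReal.ofReal (Real.sqrt (gMat φ x).det)

/-- The mean curvature vector
`H(x) = (1/n) ∑ g^{ij}(x) Π_x^⊥(∂_i ∂_j φ(x))`, where `Π_x^⊥` is the orthogonal projection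
onto the orthogonal complement of the range of `Dφ(x)`. -/
noncomputable def meanCurv {n k : ℕ} (φ : EuclideanSpace ℝ (Fin n) → EuclideanSpace ℝ (Fin (n + k)))
    (x : EuclideanSpace ℝ (Fin n)) : EuclideanSpace ℝ (Fin (n + k)) :=
  (n : ℝ)⁻¹ • ∑ i : Fin n, ∑ j : Fin n, ((gMat φ x)⁻¹ i j) •
    (Submodule.orthogonalProjectionOnto (LinearMap.range (fderiv ℝ φ x : EuclideanSpace ℝ (Fin n) →ₗ[ℝ] EuclideanSpace ℝ (Fin (n + k))))ᗮ
      (fderiv ℝ (fun y => fderiv ℝ φ y (EuclideanSpace.single i 1)) x (EuclideanSpace.single j 1)) :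
      EuclideanSpace ℝ (Fin (n + k)))

/-- The Gram matrix `(P∘Dφ(x))ᵀ (P∘Dφ(x))` of the projected differential, `P` being the
orthogonal projection onto `E`. -/
noncomputable def projGram {n k : ℕ} (φ : EuclideanSpace ℝ (Fin n) → EuclideanSpace ℝ (Fin (n + k)))
    (E : Submodule ℝ (EuclideanSpace ℝ (Fin (n + k)))) (x : EuclideanSpace ℝ (Fin n)) :
    Matrix (Fin n) (Fin n) ℝ :=
  Matrix.of fun i j =>
    inner ℝ (Submodule.orthogonalProjectionOnto E (fderiv ℝ φ x (EuclideanSpace.single i 1)) : ↥E)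
      (Submodule.orthogonalProjectionOnto E (fderiv ℝ φ x (EuclideanSpace.single j 1)))

/-- The Jacobian `J_E(x) = √(det((P∘Dφ(x))ᵀ(P∘Dφ(x)))) / √(det g(x))` of the orthogonal
projection of the immersed submanifold onto `E`. -/
noncomputable def JacE {n k : ℕ} (φ : EuclideanSpace ℝ (Fin n) → EuclideanSpace ℝ (Fin (n + k)))
    (E : Submodule ℝ (EuclideanSpace ℝ (Fin (n + k)))) (x : EuclideanSpace ℝ (Fin n)) : ℝ :=
  Real.sqrt (projGram φ E x).det / Real.sqrt (gMat φ x).det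

/-- The Riemannian norm of the gradient, `|∇u|_g = √(∑ g^{ij} ∂_i u ∂_j u)`. -/
noncomputable def gradNorm {n m : ℕ} (φ : EuclideanSpace ℝ (Fin n) → EuclideanSpace ℝ (Fin m))
    (u : EuclideanSpace ℝ (Fin n) → ℝ) (x : EuclideanSpace ℝ (Fin n)) : ℝ :=
  Real.sqrt (∑ i : Fin n, ∑ j : Fin n, ((gMat φ x)⁻¹ i j) *
    (fderiv ℝ u x (EuclideanSpace.single i 1)) * (fderiv ℝ u x (EuclideanSpace.single j 1)))

open Module in
theorem aux_preimage_null {n m : ℕ} {E : Type*} [NormedAddCommGroup E] [InnerProductSpace ℝ E]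
    [FiniteDimensional ℝ E] [MeasurableSpace E] [BorelSpace E]
    (hE : Module.finrank ℝ E = m) (hm : m ≤ n)
    (q : EuclideanSpace ℝ (Fin n) → E) (A : Set (EuclideanSpace ℝ (Fin n)))
    (hA : ∀ x ∈ A, ContDiffAt ℝ 1 q x ∧ Function.Surjective (fderiv ℝ q x))
    (s : Set E) (hs : MeasurableSet s) (hs0 : volume s = 0) :
    volume (q ⁻¹' s ∩ A) = 0 := by
  refine measure_null_of_locally_null _ fun x0 hx0 => ?_
  obtain ⟨hcd, hsurj⟩ := hA x0 hx0.2
  set L : EuclideanSpace ℝ (Fin n) →L[ℝ] E := fderiv ℝ q x0 with hLdef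
  set K : Submodule ℝ (EuclideanSpace ℝ (Fin n)) := LinearMap.ker (L : EuclideanSpace ℝ (Fin n) →ₗ[ℝ] E) with hKdef
  have hnX : finrank ℝ (EuclideanSpace ℝ (Fin n)) = n := finrank_euclideanSpace_fin
  have hrange : LinearMap.range (L : EuclideanSpace ℝ (Fin n) →ₗ[ℝ] E) = ⊤ := LinearMap.range_eq_top.2 hsurj
  have h1 := (L : EuclideanSpace ℝ (Fin n) →ₗ[ℝ] E).finrank_range_add_finrank_ker
  rw [hnX] at h1
  have h1' : finrank ℝ (LinearMap.range (L : EuclideanSpace ℝ (Fin n) →ₗ[ℝ] E)) + finrank ℝ K = n := h1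
  have hrankK : finrank ℝ K = n - m := by
    have h2 : finrank ℝ (LinearMap.range (L : EuclideanSpace ℝ (Fin n) →ₗ[ℝ] E)) = m := by
      rw [hrange, finrank_top, hE]
    omega
  have hrankKp : finrank ℝ Kᗮ = m := by
    have h2 := K.finrank_add_finrank_orthogonal
    rw [hnX] at h2
    omega
  let jE : E ≃ₗ[ℝ] Kᗮ := LinearEquiv.ofFinrankEq _ _ (by rw [hE, hrankKp])
  let j : E →L[ℝ] EuclideanSpace ℝ (Fin n) := Kᗮ.subtypeL.comp (jE.toContinuousLinearEquiv : E →L[ℝ] Kᗮ)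
  let prK : EuclideanSpace ℝ (Fin n) →L[ℝ] EuclideanSpace ℝ (Fin n) := K.subtypeL.comp (Submodule.orthogonalProjectionOnto K)
  set Φ : EuclideanSpace ℝ (Fin n) → EuclideanSpace ℝ (Fin n) := fun x => j (q x) + prK x with hΦdef
  set Φ' : EuclideanSpace ℝ (Fin n) →L[ℝ] EuclideanSpace ℝ (Fin n) := j.comp L + prK with hΦ'def
  have hdq : HasFDerivAt q L x0 := (hcd.differentiableAt one_ne_zero).hasFDerivAt
  have hΦd : HasFDerivAt Φ Φ' x0 := (j.hasFDerivAt.comp x0 hdq).add prK.hasFDerivAt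
  have hjmem : ∀ w : E, j w ∈ Kᗮ := fun w => (jE w).2
  have hinj : Function.Injective Φ' := by
    have hzero : ∀ v, Φ' v = 0 → v = 0 := by
      intro v hv
      have hv' : j (L v) + prK v = 0 := hv
      have h4 : prK v ∈ K := (Submodule.orthogonalProjectionOnto K v).2
      have hb : prK v ∈ Kᗮ := by
        have heq : prK v = -(j (L v)) := by
          rw [eq_neg_iff_add_eq_zero, add_comm]; exact hv'
        rw [heq]; exact neg_mem (hjmem _)
      have hb0 : prK v = 0 := (Submodule.disjoint_def.1 K.orthogonal_disjoint) _ h4 hb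
      have ha0 : j (L v) = 0 := by rwa [hb0, add_zero] at hv'
      have hLv : L v = 0 := by
        have h5 : (jE (L v) : EuclideanSpace ℝ (Fin n)) = 0 := ha0
        have h6 : jE (L v) = 0 := by exact_mod_cast Submodule.coe_eq_zero.1 h5
        exact jE.map_eq_zero_iff.1 h6
      have hvK : v ∈ K := by rwa [hKdef, LinearMap.mem_ker]
      have h7 : prK v = v := by
        have := Submodule.orthogonalProjectionOnto_mem_subspace_eq_self (⟨v, hvK⟩ : K)
        calc prK v = ((Submodule.orthogonalProjectionOnto K v : K) : EuclideanSpace ℝ (Fin n)) := rfl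
          _ = ((Submodule.orthogonalProjectionOnto K ((⟨v, hvK⟩ : K) : EuclideanSpace ℝ (Fin n)) : K) : EuclideanSpace ℝ (Fin n)) := rfl
          _ = v := by rw [this]
      rw [← h7, hb0]
    intro a b hab
    have := hzero (a - b) (by rw [map_sub, hab, sub_self])
    exact sub_eq_zero.1 this
  have hbij : Function.Bijective (Φ' : EuclideanSpace ℝ (Fin n) →ₗ[ℝ] EuclideanSpace ℝ (Fin n)) :=
    ⟨hinj, LinearMap.injective_iff_surjective.1 hinj⟩
  let Φe : EuclideanSpace ℝ (Fin n) ≃L[ℝ] EuclideanSpace ℝ (Fin n) := (LinearEquiv.ofBijective (Φ' : EuclideanSpace ℝ (Fin n) →ₗ[ℝ] EuclideanSpace ℝ (Fin n)) hbij).toContinuousLinearEquiv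
  have hΦe : (Φe : EuclideanSpace ℝ (Fin n) →L[ℝ] EuclideanSpace ℝ (Fin n)) = Φ' := by ext v; rfl
  have hΦcd : ContDiffAt ℝ 1 Φ x0 :=
    (j.contDiff.contDiffAt.comp x0 hcd).add prK.contDiff.contDiffAt
  have hΦd' : HasFDerivAt Φ ((Φe : EuclideanSpace ℝ (Fin n) ≃L[ℝ] EuclideanSpace ℝ (Fin n)) : EuclideanSpace ℝ (Fin n) →L[ℝ] EuclideanSpace ℝ (Fin n)) x0 := by rw [hΦe]; exact hΦd
  set PH := hΦcd.toOpenPartialHomeomorph Φ hΦd' one_ne_zero with hPHdef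
  have hx0src : x0 ∈ PH.source := hΦcd.mem_toOpenPartialHomeomorph_source hΦd' one_ne_zero
  have hPHcoe : ⇑PH = Φ := hΦcd.toOpenPartialHomeomorph_coe hΦd' one_ne_zero
  have hinvcd : ContDiffAt ℝ 1 (⇑PH.symm) (Φ x0) := hΦcd.to_localInverse hΦd' one_ne_zero
  obtain ⟨u, hu_mem, hu⟩ := hinvcd.contDiffOn le_rfl (by simp)
  obtain ⟨u', hu'sub, hu'open, hx0u'⟩ := mem_nhds_iff.1 hu_mem
  let R : EuclideanSpace ℝ (Fin n) →ₗ[ℝ] E := (jE.symm : Kᗮ →ₗ[ℝ] E) ∘ₗ ((Submodule.orthogonalProjectionOnto Kᗮ : EuclideanSpace ℝ (Fin n) →L[ℝ] Kᗮ) : EuclideanSpace ℝ (Fin n) →ₗ[ℝ] Kᗮ)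
  have hRsurj : Function.Surjective R := by
    intro w
    exact ⟨(jE w : EuclideanSpace ℝ (Fin n)), by
      simp only [R, LinearMap.coe_comp, Function.comp_apply, ContinuousLinearMap.coe_coe]
      rw [Submodule.orthogonalProjectionOnto_mem_subspace_eq_self (jE w)]
      exact jE.symm_apply_apply w⟩
  have hqR : ∀ x, R (Φ x) = q x := by
    intro x
    show jE.symm (Submodule.orthogonalProjectionOnto Kᗮ (j (q x) + prK x)) = q x
    rw [map_add]
    have h8 : Submodule.orthogonalProjectionOnto Kᗮ (prK x : EuclideanSpace ℝ (Fin n)) = 0 :=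
      Submodule.orthogonalProjectionOnto_orthogonal_apply_eq_zero
        (Submodule.orthogonalProjectionOnto K x).2
    have h9 : Submodule.orthogonalProjectionOnto Kᗮ (j (q x)) = jE (q x) := by
      have : j (q x) = ((jE (q x) : Kᗮ) : EuclideanSpace ℝ (Fin n)) := rfl
      rw [this, Submodule.orthogonalProjectionOnto_mem_subspace_eq_self]
    rw [h8, h9, add_zero, jE.symm_apply_apply]
  have hN : volume (R ⁻¹' s) = 0 := by
    have h := MeasureTheory.ae_comp_linearMap_mem_iff (L := R)
      (μ := (volume : Measure (EuclideanSpace ℝ (Fin n)))) (ν := (volume : Measure E)) hRsurj hs.compl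
    have hrhs : ∀ᵐ y : E ∂volume, y ∈ sᶜ := by
      rw [ae_iff]; simpa using hs0
    have h2 := h.2 hrhs
    rw [ae_iff] at h2; simpa [Set.preimage] using h2
  refine ⟨(q ⁻¹' s ∩ A) ∩ (PH.source ∩ Φ ⁻¹' u'), Filter.inter_mem self_mem_nhdsWithin
    (mem_nhdsWithin_of_mem_nhds (Filter.inter_mem (PH.open_source.mem_nhds hx0src)
      (hΦcd.continuousAt.preimage_mem_nhds (hu'open.mem_nhds hx0u')))), ?_⟩
  have hsubset : (q ⁻¹' s ∩ A) ∩ (PH.source ∩ Φ ⁻¹' u') ⊆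
      ⇑PH.symm '' ((R ⁻¹' s ∩ u') ∩ PH.target) := by
    rintro x ⟨⟨hxs, _⟩, hxsrc, hxu'⟩
    refine ⟨Φ x, ⟨⟨?_, hxu'⟩, ?_⟩, ?_⟩
    · show R (Φ x) ∈ s; rw [hqR]; exact hxs
    · have := PH.map_source hxsrc; rwa [hPHcoe] at this
    · have := PH.left_inv hxsrc; rwa [hPHcoe] at this
  refine measure_mono_null hsubset ?_
  have hdiff : DifferentiableOn ℝ (⇑PH.symm) ((R ⁻¹' s ∩ u') ∩ PH.target) :=
    (hu.mono fun x hx => hu'sub hx.1.2).differentiableOn one_ne_zero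
  exact addHaar_image_eq_zero_of_differentiableOn_of_addHaar_eq_zero volume hdiff
    (measure_mono_null (fun x hx => hx.1.1) hN)

/-- If `f ≥ 0` is Borel, locally integrable for the Riemannian measure of a `C¹` immersion
`φ : U → ℝ^{n+k}`, and vanishes on the critical set of the orthogonal projection `p = P∘φ`
onto a subspace `E` of dimension `m ≤ n`, then `p_# (f · dv_M)` is absolutely continuous with
respect to the Lebesgue measure of `E`. -/
theorem pushforward_absolutelyContinuous (n k m : ℕ) (hm : m ≤ n)
    (U : Set (EuclideanSpace ℝ (Fin n))) (hU : IsOpen U)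
    (φ : EuclideanSpace ℝ (Fin n) → EuclideanSpace ℝ (Fin (n + k)))
    (hφ : ContDiffOn ℝ 1 φ U)
    (himm : ∀ x ∈ U, Function.Injective (fderiv ℝ φ x))
    (E : Submodule ℝ (EuclideanSpace ℝ (Fin (n + k)))) (hE : Module.finrank ℝ E = m)
    (f : EuclideanSpace ℝ (Fin n) → ℝ) (hf : Measurable f) (hf0 : ∀ x, 0 ≤ f x)
    (hloc : LocallyIntegrableOn f U (volM φ U))
    (hcrit : ∀ x ∈ U,
      ¬ Function.Surjective (fun v : EuclideanSpace ℝ (Fin n) =>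
        Submodule.orthogonalProjectionOnto E (fderiv ℝ φ x v)) → f x = 0) :
    ((volM φ U).withDensity fun x => ENNReal.ofReal (f x)).map
        (fun x => Submodule.orthogonalProjectionOnto E (φ x)) ≪ (volume : Measure ↥E) := by
  classical
  set q : EuclideanSpace ℝ (Fin n) → ↥E := fun x => Submodule.orthogonalProjectionOnto E (φ x) with hq
  set g1 : EuclideanSpace ℝ (Fin n) → ℝ≥0∞ :=
    fun x => ENNReal.ofReal (Real.sqrt (gMat φ x).det) with hg1
  have hg1meas : Measurable g1 := by
    apply ENNReal.measurable_ofReal.comp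
    apply Real.continuous_sqrt.measurable.comp
    have hc : Continuous fun T : EuclideanSpace ℝ (Fin n) →L[ℝ] EuclideanSpace ℝ (Fin (n + k)) =>
        ((Matrix.of fun i j => T (EuclideanSpace.single j 1) i : Matrix (Fin (n + k)) (Fin n) ℝ)ᵀ *
          (Matrix.of fun i j => T (EuclideanSpace.single j 1) i)).det := by
      have hent : ∀ (i : Fin (n + k)) (j : Fin n),
          Continuous fun T : EuclideanSpace ℝ (Fin n) →L[ℝ] EuclideanSpace ℝ (Fin (n + k)) =>
            T (EuclideanSpace.single j 1) i := fun i j =>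
        (EuclideanSpace.proj i).continuous.comp (continuous_id.clm_apply continuous_const)
      exact ((continuous_matrix fun i j => hent i j).matrix_transpose.matrix_mul
        (continuous_matrix fun i j => hent i j)).matrix_det
    exact hc.measurable.comp (measurable_fderiv ℝ φ)
  set ρ : EuclideanSpace ℝ (Fin n) → ℝ≥0∞ := fun x => g1 x * ENNReal.ofReal (f x) with hρ
  have hfm : Measurable fun x => ENNReal.ofReal (f x) := ENNReal.measurable_ofReal.comp hf
  have hρmeas : Measurable ρ := hg1meas.mul hfm
  have hμeq : (volM φ U).withDensity (fun x => ENNReal.ofReal (f x)) =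
      (volume.restrict U).withDensity ρ := by
    rw [volM, ← withDensity_mul _ hg1meas hfm]; rfl
  have hcont : ContinuousOn q U :=
    (Submodule.orthogonalProjectionOnto E).continuous.comp_continuousOn hφ.continuousOn
  have hac : ((volM φ U).withDensity fun x => ENNReal.ofReal (f x)) ≪ volume.restrict U :=
    (withDensity_absolutelyContinuous _ _).trans (withDensity_absolutelyContinuous _ _)
  have haem : AEMeasurable q ((volM φ U).withDensity fun x => ENNReal.ofReal (f x)) :=
    (hcont.aemeasurable hU.measurableSet).mono_ac hac
  refine Measure.AbsolutelyContinuous.mk fun s hs hs0 => ?_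
  rw [Measure.map_apply_of_aemeasurable haem hs]
  set A : Set (EuclideanSpace ℝ (Fin n)) :=
    {x | x ∈ U ∧ Function.Surjective (fun v : EuclideanSpace ℝ (Fin n) =>
      Submodule.orthogonalProjectionOnto E (fderiv ℝ φ x v))} with hA
  have hAnull : volume (q ⁻¹' s ∩ A) = 0 := by
    refine aux_preimage_null hE hm q A (fun x hx => ?_) s hs hs0
    have hxU : x ∈ U := hx.1
    have hφx : ContDiffAt ℝ 1 φ x := hφ.contDiffAt (hU.mem_nhds hxU)
    have hcd : ContDiffAt ℝ 1 q x :=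
      (Submodule.orthogonalProjectionOnto E).contDiff.contDiffAt.comp x hφx
    have hd : HasFDerivAt q ((Submodule.orthogonalProjectionOnto E).comp (fderiv ℝ φ x)) x :=
      (Submodule.orthogonalProjectionOnto E).hasFDerivAt.comp x (hφx.differentiableAt one_ne_zero).hasFDerivAt
    refine ⟨hcd, ?_⟩
    rw [hd.fderiv]
    exact hx.2
  obtain ⟨N, hsubN, hNmeas, hN0⟩ := exists_measurable_superset_of_null hAnull
  rw [hμeq]
  set μ' : Measure (EuclideanSpace ℝ (Fin n)) := (volume.restrict U).withDensity ρ with hμ'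
  have hμ'ac : μ' ≪ volume.restrict U := withDensity_absolutelyContinuous _ _
  set Z : Set (EuclideanSpace ℝ (Fin n)) := {x | ρ x = 0} with hZ
  have hZmeas : MeasurableSet Z := hρmeas (measurableSet_singleton 0)
  have hsub : q ⁻¹' s ⊆ N ∪ (Z ∪ Uᶜ) := by
    intro x hx
    by_cases hxN : x ∈ N
    · exact Or.inl hxN
    by_cases hxU : x ∈ U
    · refine Or.inr (Or.inl ?_)
      have hxA : x ∉ A := fun hxA => hxN (hsubN ⟨hx, hxA⟩)
      have hns : ¬ Function.Surjective (fun v : EuclideanSpace ℝ (Fin n) =>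
          Submodule.orthogonalProjectionOnto E (fderiv ℝ φ x v)) := fun h => hxA ⟨hxU, h⟩
      have : f x = 0 := hcrit x hxU hns
      show ρ x = 0
      rw [hρ]; simp [this]
    · exact Or.inr (Or.inr hxU)
  refine measure_mono_null hsub ?_
  refine measure_union_null ?_ (measure_union_null ?_ ?_)
  · refine hμ'ac ?_
    rw [Measure.restrict_apply' hU.measurableSet]
    exact measure_mono_null Set.inter_subset_left hN0
  · rw [hμ', withDensity_apply _ hZmeas]
    rw [setLIntegral_congr_fun hZmeas (fun x hx => hx)]
    simp
  · refine hμ'ac ?_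
    rw [Measure.restrict_apply hU.measurableSet.compl]
    simp
end

section
/- The sequence α_{n,1} = ( ∫₀^π |cos r|^{1/n} (sin r)^{n−1} dr ) / ( ∫₀^π (sin r)^{n−1} dr ) satisfies lim_{n→∞} α_{n,1} = 1. -/
open Real intervalIntegral Filter

lemma sin_pow_integral_lb (m : ℕ) :
    π / (2 * (m + 1)) ≤ ∫ r in (0:ℝ)..π, Real.sin r ^ m := by
  have hπ : (0:ℝ) < π := Real.pi_pos
  have hcont : Continuous fun r : ℝ => Real.sin r ^ m := by continuity
  have h1 : (∫ r in (0:ℝ)..(π/2), (2/π * r)^m) ≤ ∫ r in (0:ℝ)..(π/2), Real.sin r ^ m := by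
    apply intervalIntegral.integral_mono_on (by positivity)
      (by apply Continuous.intervalIntegrable; continuity)
      (hcont.intervalIntegrable _ _)
    intro r hr
    exact pow_le_pow_left₀ (mul_nonneg (by positivity) hr.1) (Real.mul_le_sin hr.1 hr.2) m
  have h2 : (∫ r in (0:ℝ)..(π/2), (2/π * r)^m) = π / (2 * (m + 1)) := by
    simp_rw [mul_pow]
    rw [intervalIntegral.integral_const_mul, integral_pow]
    rw [div_pow, div_pow]
    have : (π:ℝ) ≠ 0 := hπ.ne'
    field_simp
    ring
  have h3 : (0:ℝ) ≤ ∫ r in (π/2)..π, Real.sin r ^ m := by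
    apply intervalIntegral.integral_nonneg (by linarith)
    intro u hu
    exact pow_nonneg (Real.sin_nonneg_of_nonneg_of_le_pi (by linarith [hu.1]) hu.2) m
  have h4 : (∫ r in (0:ℝ)..π, Real.sin r ^ m) =
      (∫ r in (0:ℝ)..(π/2), Real.sin r ^ m) + ∫ r in (π/2)..π, Real.sin r ^ m :=
    (intervalIntegral.integral_add_adjacent_intervals (hcont.intervalIntegrable _ _)
      (hcont.intervalIntegrable _ _)).symm
  linarith [h2 ▸ h1]

set_option maxHeartbeats 1000000 in
/-- The constants `α_{n,1} = (∫₀^π |cos r|^{1/n} sin^{n-1} r dr) / (∫₀^π sin^{n-1} r dr)`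
appearing in the isoperimetric inequality for hypersurfaces tend to `1` as `n → ∞`. -/
theorem tendsto_alpha_n_one :
    Filter.Tendsto
      (fun n : ℕ =>
        (∫ r in (0 : ℝ)..Real.pi, |Real.cos r| ^ ((1 : ℝ) / n) * Real.sin r ^ (n - 1)) /
          (∫ r in (0 : ℝ)..Real.pi, Real.sin r ^ (n - 1)))
      Filter.atTop (nhds 1) := by
  have hπ : (0:ℝ) < π := Real.pi_pos
  set L : ℕ → ℝ := fun n => Real.exp (-2 * (Real.log n / n)) * (1 - 2 / (n:ℝ)) with hLdef
  -- L tends to 1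
  have hlog : Tendsto (fun n : ℕ => Real.log n / n) atTop (nhds 0) := by
    have := Real.tendsto_pow_log_div_mul_add_atTop 1 0 1 one_ne_zero
    simp only [pow_one, one_mul, add_zero] at this
    exact this.comp tendsto_natCast_atTop_atTop
  have hL : Tendsto L atTop (nhds 1) := by
    have h1 : Tendsto (fun n : ℕ => Real.exp (-2 * (Real.log n / n))) atTop (nhds 1) := by
      have h0 : Tendsto (fun n : ℕ => -2 * (Real.log n / n)) atTop (nhds 0) := by
        simpa using hlog.const_mul (-2)
      have h2 := (Real.continuous_exp.tendsto 0).comp h0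
      rw [Real.exp_zero] at h2
      exact h2
    have h2 : Tendsto (fun n : ℕ => 1 - 2 / (n:ℝ)) atTop (nhds 1) := by
      have := (tendsto_const_div_atTop_nhds_zero_nat (2:ℝ)).const_sub 1
      simpa using this
    rw [hLdef]
    have h3 := h1.mul h2
    simpa using h3
  clear_value L
  apply tendsto_of_tendsto_of_tendsto_of_le_of_le' hL tendsto_const_nhds
  · -- eventually L n ≤ α n
    filter_upwards [eventually_ge_atTop 3] with n hn
    have hn0 : (0:ℝ) < n := by positivity
    have hn1 : (1:ℝ) ≤ n := by exact_mod_cast Nat.one_le_of_lt hn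
    set m := n - 1 with hm
    set ε : ℝ := ((n:ℝ)^2)⁻¹ with hε
    have hεpos : 0 < ε := by positivity
    have hε1 : ε ≤ 1 := by
      rw [hε]; rw [inv_le_one_iff₀]; right; nlinarith
    set δ : ℝ := π * ε / 2 with hδ
    have hδpos : 0 < δ := by positivity
    have hδle : δ ≤ π / 2 := by rw [hδ]; nlinarith
    set a : ℝ := π/2 - δ with ha
    set b : ℝ := π/2 + δ with hb
    have ha0 : 0 ≤ a := by rw [ha]; linarith
    have hbπ : b ≤ π := by rw [hb]; linarith
    have hab : a ≤ b := by rw [ha, hb]; linarith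
    have hsinδ : ε ≤ Real.sin δ := by
      have := Real.mul_le_sin hδpos.le hδle
      calc ε = 2 / π * δ := by rw [hδ]; field_simp
        _ ≤ Real.sin δ := this
    set c : ℝ := ε ^ ((1:ℝ)/n) with hc
    have hcpos : 0 < c := Real.rpow_pos_of_pos hεpos _
    have hc1 : c ≤ 1 := Real.rpow_le_one hεpos.le hε1 (by positivity)
    set f : ℝ → ℝ := fun r => |Real.cos r| ^ ((1:ℝ)/n) * Real.sin r ^ m with hf
    set g : ℝ → ℝ := fun r => Real.sin r ^ m with hg
    have hfc : Continuous f := by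
      apply Continuous.mul
      · exact (continuous_abs.comp Real.continuous_cos).rpow_const (fun x => Or.inr (by positivity))
      · continuity
    have hgc : Continuous g := by continuity
    have hfi : ∀ u v : ℝ, IntervalIntegrable f MeasureTheory.volume u v :=
      fun u v => hfc.intervalIntegrable u v
    have hgi : ∀ u v : ℝ, IntervalIntegrable g MeasureTheory.volume u v :=
      fun u v => hgc.intervalIntegrable u v
    clear_value c ε δ a b
    set I : ℝ := ∫ r in (0:ℝ)..π, g r with hI
    set J : ℝ := ∫ r in (0:ℝ)..π, f r with hJ
    clear_value I J
    -- lower bound on I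
    have hIlb : π / (2 * n) ≤ I := by
      have := sin_pow_integral_lb m
      have hmn : ((m:ℝ) + 1) = n := by
        rw [hm]
        have : (1:ℕ) ≤ n := by omega
        push_cast [Nat.cast_sub this]
        ring
      rw [hmn] at this
      rw [hI]
      simp only [hg]
      exact this
    have hIpos : 0 < I := lt_of_lt_of_le (by positivity) hIlb
    -- split
    have hIsplit : I = (∫ r in (0:ℝ)..a, g r) + (∫ r in a..b, g r) + ∫ r in b..π, g r := by
      rw [intervalIntegral.integral_add_adjacent_intervals (hgi 0 a) (hgi a b),
        intervalIntegral.integral_add_adjacent_intervals (hgi 0 b) (hgi b π)]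
      exact hI
    have hJsplit : J = (∫ r in (0:ℝ)..a, f r) + (∫ r in a..b, f r) + ∫ r in b..π, f r := by
      rw [intervalIntegral.integral_add_adjacent_intervals (hfi 0 a) (hfi a b),
        intervalIntegral.integral_add_adjacent_intervals (hfi 0 b) (hfi b π)]
      exact hJ
    -- on [0,a]
    have hb1 : (∫ r in (0:ℝ)..a, c * g r) ≤ ∫ r in (0:ℝ)..a, f r := by
      apply intervalIntegral.integral_mono_on ha0 ((hgi 0 a).const_mul c) (hfi 0 a)
      intro r hr
      have hra : r ≤ a := hr.2
      have hr0 : 0 ≤ r := hr.1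
      have hcos : ε ≤ |Real.cos r| := by
        have h1 : Real.cos a ≤ Real.cos r :=
          Real.cos_le_cos_of_nonneg_of_le_pi hr0 (by linarith) hra
        have h2 : Real.cos a = Real.sin δ := by rw [ha, Real.cos_pi_div_two_sub]
        calc ε ≤ Real.sin δ := hsinδ
          _ ≤ Real.cos r := by rw [← h2]; exact h1
          _ ≤ |Real.cos r| := le_abs_self _
      have hrpow : c ≤ |Real.cos r| ^ ((1:ℝ)/n) := by
        rw [hc]
        exact Real.rpow_le_rpow hεpos.le hcos (by positivity)
      have hsin : 0 ≤ Real.sin r ^ m :=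
        pow_nonneg (Real.sin_nonneg_of_nonneg_of_le_pi hr0 (by linarith)) m
      exact mul_le_mul_of_nonneg_right hrpow hsin
    -- on [b,π]
    have hb2 : (∫ r in b..π, c * g r) ≤ ∫ r in b..π, f r := by
      apply intervalIntegral.integral_mono_on hbπ ((hgi b π).const_mul c) (hfi b π)
      intro r hr
      have hrb : b ≤ r := hr.1
      have hrπ : r ≤ π := hr.2
      have hcos : ε ≤ |Real.cos r| := by
        have h1 : Real.cos r ≤ Real.cos b :=
          Real.cos_le_cos_of_nonneg_of_le_pi (by linarith [hδpos]) hrπ hrb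
        have h2 : Real.cos b = -Real.sin δ := by rw [hb, Real.cos_add, Real.cos_pi_div_two, Real.sin_pi_div_two]; ring
        calc ε ≤ Real.sin δ := hsinδ
          _ ≤ -Real.cos r := by rw [h2] at h1; linarith
          _ ≤ |Real.cos r| := neg_le_abs _
      have hrpow : c ≤ |Real.cos r| ^ ((1:ℝ)/n) := by
        rw [hc]
        exact Real.rpow_le_rpow hεpos.le hcos (by positivity)
      have hsin : 0 ≤ Real.sin r ^ m :=
        pow_nonneg (Real.sin_nonneg_of_nonneg_of_le_pi (by linarith [hδpos]) hrπ) m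
      exact mul_le_mul_of_nonneg_right hrpow hsin
    -- middle f ≥ 0
    have hb3 : (0:ℝ) ≤ ∫ r in a..b, f r := by
      apply intervalIntegral.integral_nonneg hab
      intro u hu
      have : 0 ≤ Real.sin u ^ m :=
        pow_nonneg (Real.sin_nonneg_of_nonneg_of_le_pi (by linarith [hu.1]) (by linarith [hu.2])) m
      positivity
    -- middle g small
    have hb4 : (∫ r in a..b, g r) ≤ π * ε := by
      have : (∫ r in a..b, g r) ≤ ∫ r in a..b, (1:ℝ) := by
        apply intervalIntegral.integral_mono_on hab (hgi a b)
          (intervalIntegrable_const)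
        intro u hu
        exact pow_le_one₀
          (Real.sin_nonneg_of_nonneg_of_le_pi (by linarith [hu.1]) (by linarith [hu.2]))
          (Real.sin_le_one u)
      rw [intervalIntegral.integral_const, smul_eq_mul, mul_one] at this
      calc (∫ r in a..b, g r) ≤ b - a := this
        _ = π * ε := by rw [ha, hb, hδ]; ring
    -- J lower bound
    have hJlb : c * (I - π * ε) ≤ J := by
      have e1 : (∫ r in (0:ℝ)..a, c * g r) = c * ∫ r in (0:ℝ)..a, g r :=
        intervalIntegral.integral_const_mul c g
      have e2 : (∫ r in b..π, c * g r) = c * ∫ r in b..π, g r :=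
        intervalIntegral.integral_const_mul c g
      rw [e1] at hb1; rw [e2] at hb2
      have : c * (I - π * ε) ≤ c * ((∫ r in (0:ℝ)..a, g r) + ∫ r in b..π, g r) := by
        apply mul_le_mul_of_nonneg_left _ hcpos.le
        have := hIsplit
        linarith
      calc c * (I - π * ε) ≤ c * ((∫ r in (0:ℝ)..a, g r) + ∫ r in b..π, g r) := this
        _ = c * (∫ r in (0:ℝ)..a, g r) + c * ∫ r in b..π, g r := by ring
        _ ≤ (∫ r in (0:ℝ)..a, f r) + ∫ r in b..π, f r := add_le_add hb1 hb2
        _ ≤ J := by rw [hJsplit]; linarith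
    -- final lower bound
    have key : L n * I ≤ J := by
      have h1 : L n = c * (1 - 2 / n) := by
        simp only [hLdef, hc, hε]
        rw [Real.rpow_def_of_pos (show (0:ℝ) < ((n:ℝ)^2)⁻¹ by positivity)]
        congr 2
        rw [Real.log_inv, Real.log_pow]
        push_cast
        ring
      rw [h1]
      have h2 : (1 - 2 / (n:ℝ)) * I ≤ I - π * ε := by
        have : π * ε ≤ 2 / n * I := by
          have : 2 / (n:ℝ) * (π / (2 * n)) = π * ε := by
            rw [hε]; field_simp
          calc π * ε = 2 / (n:ℝ) * (π / (2 * n)) := this.symm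
            _ ≤ 2 / n * I := by
                apply mul_le_mul_of_nonneg_left hIlb (by positivity)
        linarith
      calc c * (1 - 2 / n) * I = c * ((1 - 2 / (n:ℝ)) * I) := by ring
        _ ≤ c * (I - π * ε) := mul_le_mul_of_nonneg_left h2 hcpos.le
        _ ≤ J := hJlb
    rw [le_div_iff₀ hIpos]
    exact key
  · -- eventually α n ≤ 1
    filter_upwards [eventually_ge_atTop 1] with n hn
    have hn0 : (0:ℝ) < n := by exact_mod_cast Nat.pos_of_ne_zero (by omega)
    set m := n - 1 with hm
    set g : ℝ → ℝ := fun r => Real.sin r ^ m with hg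
    set f : ℝ → ℝ := fun r => |Real.cos r| ^ ((1:ℝ)/n) * Real.sin r ^ m with hf
    have hfc : Continuous f := by
      apply Continuous.mul
      · exact (continuous_abs.comp Real.continuous_cos).rpow_const (fun x => Or.inr (by positivity))
      · continuity
    have hgc : Continuous g := by continuity
    have hIlb : π / (2 * n) ≤ ∫ r in (0:ℝ)..π, g r := by
      have := sin_pow_integral_lb m
      have hmn : ((m:ℝ) + 1) = n := by
        rw [hm]
        have : (1:ℕ) ≤ n := by omega
        push_cast [Nat.cast_sub this]
        ring
      rwa [hmn] at this
    have hIpos : 0 < ∫ r in (0:ℝ)..π, g r := lt_of_lt_of_le (by positivity) hIlb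
    have hJI : (∫ r in (0:ℝ)..π, f r) ≤ ∫ r in (0:ℝ)..π, g r := by
      apply intervalIntegral.integral_mono_on hπ.le (hfc.intervalIntegrable 0 π)
        (hgc.intervalIntegrable 0 π)
      intro r hr
      have hsin : 0 ≤ Real.sin r ^ m :=
        pow_nonneg (Real.sin_nonneg_of_nonneg_of_le_pi hr.1 hr.2) m
      have : |Real.cos r| ^ ((1:ℝ)/n) ≤ 1 :=
        Real.rpow_le_one (abs_nonneg _) (Real.abs_cos_le_one r) (by positivity)
      calc |Real.cos r| ^ ((1:ℝ)/n) * Real.sin r ^ m ≤ 1 * Real.sin r ^ m :=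
            mul_le_mul_of_nonneg_right this hsin
        _ = Real.sin r ^ m := one_mul _
    exact div_le_one_of_le₀ hJI hIpos.le
end
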